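/- The class S of subsets of Z that are 2^n-periodic for some n ≥ 0, ordered by inclusion, is a universal partial order: every countable partial order embeds into (S, ⊆). -/

import Mathlib

/-- A subset of `ℤ` which is `2^n`-periodic for some natural number `n`. -/
def IsPow2Periodic (S : Set ℤ) : Prop :=
  ∃ n : ℕ, ∀ x : ℤ, x ∈ S ↔ x + 2 ^ n ∈ S

namespace PeriodicUniversal

attribute [local instance] Classical.propDecidable

open Finset

noncomputable section

variable (r : ℕ → ℕ → Prop)

/-- The dyadic residue class `{x : x ≡ p.1 mod 2^p.2}`. -/
def cls (p : ℤ × ℕ) : Set ℤ := {x | (2:ℤ) ^ p.2 ∣ x - p.1}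

def spl0 (p : ℤ × ℕ) : ℤ × ℕ := (p.1, p.2 + 1)
def spl1 (p : ℤ × ℕ) : ℤ × ℕ := (p.1 + 2 ^ p.2, p.2 + 1)

lemma self_mem_cls (p : ℤ × ℕ) : p.1 ∈ cls p := by simp [cls]

lemma cls_spl0_subset (p : ℤ × ℕ) : cls (spl0 p) ⊆ cls p := by
  intro x hx
  exact dvd_trans (pow_dvd_pow 2 (Nat.le_succ _)) hx

lemma cls_spl1_subset (p : ℤ × ℕ) : cls (spl1 p) ⊆ cls p := by
  intro x hx
  have h2 : (2:ℤ) ^ p.2 ∣ x - (p.1 + 2 ^ p.2) :=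
    dvd_trans (pow_dvd_pow 2 (Nat.le_succ _)) hx
  have h3 : x - p.1 = (x - (p.1 + 2 ^ p.2)) + 2 ^ p.2 := by ring
  show (2:ℤ) ^ p.2 ∣ x - p.1
  rw [h3]
  exact dvd_add h2 dvd_rfl

lemma cls_spl_disjoint (p : ℤ × ℕ) (x : ℤ) (h0 : x ∈ cls (spl0 p))
    (h1 : x ∈ cls (spl1 p)) : False := by
  have h : (2:ℤ) ^ (p.2 + 1) ∣ (x - p.1) - (x - (p.1 + 2 ^ p.2)) := dvd_sub h0 h1
  have h' : (x - p.1) - (x - (p.1 + 2 ^ p.2)) = 2 ^ p.2 := by ring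
  rw [h'] at h
  have hle : (2:ℤ) ^ (p.2 + 1) ≤ 2 ^ p.2 := Int.le_of_dvd (by positivity) h
  have hlt : (2:ℤ) ^ p.2 < 2 ^ (p.2 + 1) := by
    exact pow_lt_pow_right₀ (by norm_num) (Nat.lt_succ_self _)
  linarith

/-- The recursively constructed reserved cells, one per finite "pattern" set. -/
def G : ℕ → Finset ℕ → ℤ × ℕ
  | 0, _ => (0, 0)
  | (n+1), A =>
    if n ∈ A then
      (if ∃ j ∈ A.erase n, r j n then G n (A.erase n) else spl1 (G n (A.erase n)))
    else
      (if (∀ j ∈ A, ¬ r j n) ∧ (∀ j, j < n → r n j → j ∈ A) then spl0 (G n A)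
       else G n A)

lemma G_succ (n : ℕ) (A : Finset ℕ) :
    G r (n+1) A =
      if n ∈ A then
        (if ∃ j ∈ A.erase n, r j n then G r n (A.erase n)
         else spl1 (G r n (A.erase n)))
      else
        (if (∀ j ∈ A, ¬ r j n) ∧ (∀ j, j < n → r n j → j ∈ A) then spl0 (G r n A)
         else G r n A) := rfl

lemma G_snd_le : ∀ n (A : Finset ℕ), (G r n A).2 ≤ n := by
  intro n
  induction n with
  | zero => intro A; simp [G]
  | succ n ih =>
    intro A
    have h1 := ih (A.erase n)
    have h2 := ih A
    rw [G_succ]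
    split_ifs <;> (try simp only [spl0, spl1]) <;> omega

lemma cls_G_succ_subset (n : ℕ) (A : Finset ℕ) :
    cls (G r (n+1) A) ⊆ cls (G r n (A.erase n)) := by
  rw [G_succ]
  split_ifs with h1 h2 h3
  · exact subset_rfl
  · exact cls_spl1_subset _
  · rw [Finset.erase_eq_of_notMem h1]
    exact cls_spl0_subset _
  · rw [Finset.erase_eq_of_notMem h1]

lemma filter_lt_erase (A : Finset ℕ) (N : ℕ) :
    (A.filter (· < N + 1)).erase N = A.filter (· < N) := by
  ext j
  simp only [Finset.mem_erase, Finset.mem_filter]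
  constructor
  · rintro ⟨h1, h2, h3⟩; exact ⟨h2, by omega⟩
  · rintro ⟨h1, h2⟩; exact ⟨by omega, h1, by omega⟩

lemma cls_G_filter_subset (A : Finset ℕ) {n N : ℕ} (h : n ≤ N) :
    cls (G r N (A.filter (· < N))) ⊆ cls (G r n (A.filter (· < n))) := by
  induction N, h using Nat.le_induction with
  | base => exact subset_rfl
  | succ N hN ih =>
    refine subset_trans ?_ ih
    have h2 := cls_G_succ_subset r N (A.filter (· < N + 1))
    rwa [filter_lt_erase] at h2

/-- `A` is an up-closed subset of `{0, …, n-1}` with respect to `r`. -/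
def upClosed (n : ℕ) (A : Finset ℕ) : Prop :=
  A ⊆ range n ∧ ∀ i ∈ A, ∀ k, k < n → r i k → k ∈ A

lemma upClosed_erase {n : ℕ} {A : Finset ℕ} (h : upClosed r (n+1) A) :
    upClosed r n (A.erase n) := by
  constructor
  · intro j hj
    rw [Finset.mem_erase] at hj
    have := h.1 hj.2
    rw [Finset.mem_range] at this ⊢
    omega
  · intro i hi k hk hik
    rw [Finset.mem_erase] at hi ⊢
    exact ⟨by omega, h.2 i hi.2 k (by omega) hik⟩

lemma G_disjoint : ∀ (n : ℕ) (A B : Finset ℕ), upClosed r n A → upClosed r n B →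
    A ≠ B → ∀ x : ℤ, x ∈ cls (G r n A) → x ∈ cls (G r n B) → False := by
  intro n
  induction n with
  | zero =>
    intro A B hA hB hne x _ _
    apply hne
    have hA' : A = ∅ := Finset.subset_empty.mp (by simpa using hA.1)
    have hB' : B = ∅ := Finset.subset_empty.mp (by simpa using hB.1)
    rw [hA', hB']
  | succ n ih =>
    intro A B hA hB hne x hxA hxB
    by_cases hAB : A.erase n = B.erase n
    · have key : ∀ (A B : Finset ℕ), upClosed r (n+1) A → upClosed r (n+1) B →
          n ∈ A → n ∉ B → B = A.erase n →
          ∀ y : ℤ, y ∈ cls (G r (n+1) A) → y ∈ cls (G r (n+1) B) → False := by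
        clear hxA hxB hne hAB hA hB A B
        intro A B hA hB hnA hnB hBA y hyA hyB
        subst hBA
        have hno : ∀ j ∈ A.erase n, ¬ r j n := by
          intro j hj hr
          exact hnB (hB.2 j hj n (Nat.lt_succ_self n) hr)
        have hGA : G r (n+1) A = spl1 (G r n (A.erase n)) := by
          rw [G_succ, if_pos hnA, if_neg]
          rintro ⟨j, hj, hr⟩
          exact hno j hj hr
        have hcond : (∀ j ∈ A.erase n, ¬ r j n) ∧
            (∀ j, j < n → r n j → j ∈ A.erase n) := by
          refine ⟨hno, fun j hj hr => ?_⟩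
          have hjA : j ∈ A := hA.2 n hnA j (by omega) hr
          exact Finset.mem_erase.mpr ⟨by omega, hjA⟩
        have hGB : G r (n+1) (A.erase n) = spl0 (G r n (A.erase n)) := by
          rw [G_succ, if_neg (Finset.notMem_erase n A), if_pos hcond]
        rw [hGA] at hyA
        rw [hGB] at hyB
        exact cls_spl_disjoint _ y hyB hyA
      by_cases hnA : n ∈ A <;> by_cases hnB : n ∈ B
      · apply hne
        rw [← Finset.insert_erase hnA, ← Finset.insert_erase hnB, hAB]
      · exact key A B hA hB hnA hnB
          (by rw [hAB, Finset.erase_eq_of_notMem hnB]) x hxA hxB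
      · exact key B A hB hA hnB hnA
          (by rw [← hAB, Finset.erase_eq_of_notMem hnA]) x hxB hxA
      · apply hne
        rw [← Finset.erase_eq_of_notMem hnA, ← Finset.erase_eq_of_notMem hnB, hAB]
    · exact ih (A.erase n) (B.erase n) (upClosed_erase r hA) (upClosed_erase r hB)
        hAB x (cls_G_succ_subset r n A hxA) (cls_G_succ_subset r n B hxB)

/-- `B` is a "fresh" pattern created at stage `s`. -/
def Fresh (s : ℕ) (B : Finset ℕ) : Prop :=
  s ∈ B ∧ upClosed r (s+1) B ∧ ∀ j ∈ B.erase s, ¬ r j s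

/-- The set assigned to index `m`: the union of all fresh cells from stages
`s ≤ m` whose creating index satisfies `r s m`. -/
def C (m : ℕ) : Set ℤ :=
  {x | ∃ s, s ≤ m ∧ ∃ B : Finset ℕ, Fresh r s B ∧ r s m ∧ x ∈ cls (G r (s+1) B)}

/-- Key lemma: a reserved cell whose pattern contains some `j` with `r j m`
is entirely inside `C m`. -/
lemma cls_subset_C (hrefl : ∀ a, r a a) (htrans : ∀ a b c, r a b → r b c → r a c)
    {N : ℕ} {A : Finset ℕ} {m j : ℕ} (hA : upClosed r N A) (hj : j ∈ A)
    (hjm : r j m) : cls (G r N A) ⊆ C r m := by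
  have hjN : j < N := Finset.mem_range.mp (hA.1 hj)
  obtain ⟨j0, hj0A, hj0m, hj0le, hj0N⟩ :
      ∃ j0, j0 ∈ A ∧ r j0 m ∧ j0 ≤ m ∧ j0 < N := by
    rcases le_or_gt j m with h | h
    · exact ⟨j, hj, hjm, h, hjN⟩
    · have hmA : m ∈ A := hA.2 j hj m (by omega) hjm
      exact ⟨m, hmA, hrefl m, le_rfl, by omega⟩
  have hex : ∃ k, k ∈ A ∧ r k j0 := ⟨j0, hj0A, hrefl j0⟩
  set s := Nat.find hex with hs
  obtain ⟨hsA, hsj0⟩ := Nat.find_spec hex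
  have hsle : s ≤ j0 := Nat.find_le ⟨hj0A, hrefl j0⟩
  have hsN : s < N := by omega
  have hsm : r s m := htrans s j0 m hsj0 hj0m
  have hB : Fresh r s (A.filter (· < s+1)) := by
    refine ⟨Finset.mem_filter.mpr ⟨hsA, by omega⟩, ⟨?_, ?_⟩, ?_⟩
    · intro i hi
      rw [Finset.mem_filter] at hi
      exact Finset.mem_range.mpr hi.2
    · intro i hi k hk hik
      rw [Finset.mem_filter] at hi
      refine Finset.mem_filter.mpr ⟨hA.2 i hi.1 k (by omega) hik, hk⟩
    · intro j' hj' hr'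
      rw [Finset.mem_erase, Finset.mem_filter] at hj'
      have hlt : j' < s := by omega
      exact Nat.find_min hex hlt ⟨hj'.2.1, htrans j' s j0 hr' hsj0⟩
  intro x hx
  refine ⟨s, by omega, A.filter (· < s+1), hB, hsm, ?_⟩
  have h1 : A.filter (· < N) = A :=
    Finset.filter_true_of_mem (fun i hi => Finset.mem_range.mp (hA.1 hi))
  have h2 := cls_G_filter_subset r A (show s + 1 ≤ N by omega)
  rw [h1] at h2
  exact h2 hx

lemma C_mono (hrefl : ∀ a, r a a) (htrans : ∀ a b c, r a b → r b c → r a c)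
    {a b : ℕ} (hab : r a b) : C r a ⊆ C r b := by
  rintro x ⟨s, hs, B, hF, hsa, hx⟩
  exact cls_subset_C r hrefl htrans hF.2.1 hF.1 (htrans s a b hsa hab) hx

/-- The up-set of `a` restricted to `{0, …, t-1}`. -/
def Afun (a t : ℕ) : Finset ℕ := (range t).filter (fun j => r a j)

lemma mem_Afun {a t j : ℕ} : j ∈ Afun r a t ↔ j < t ∧ r a j := by
  simp [Afun]

lemma Afun_erase {a t : ℕ} (h : r a t) : (Afun r a (t+1)).erase t = Afun r a t := by
  ext j
  simp only [Finset.mem_erase, mem_Afun]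
  constructor
  · rintro ⟨h1, h2, h3⟩; exact ⟨by omega, h3⟩
  · rintro ⟨h1, h2⟩; exact ⟨by omega, by omega, h2⟩

lemma Afun_succ_of_not {a t : ℕ} (h : ¬ r a t) : Afun r a (t+1) = Afun r a t := by
  ext j
  simp only [mem_Afun]
  constructor
  · rintro ⟨h1, h2⟩
    refine ⟨?_, h2⟩
    rcases Nat.lt_succ_iff_lt_or_eq.mp h1 with h' | rfl
    · exact h'
    · exact absurd h2 h
  · rintro ⟨h1, h2⟩; exact ⟨by omega, h2⟩

lemma Afun_filter {a : ℕ} {s t : ℕ} (h : s ≤ t) :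
    (Afun r a t).filter (· < s) = Afun r a s := by
  ext j
  simp only [Finset.mem_filter, mem_Afun]
  constructor
  · rintro ⟨⟨h1, h2⟩, h3⟩; exact ⟨h3, h2⟩
  · rintro ⟨h1, h2⟩; exact ⟨⟨by omega, h2⟩, h1⟩

lemma upClosed_Afun (htrans : ∀ a b c, r a b → r b c → r a c) (a t : ℕ) :
    upClosed r t (Afun r a t) := by
  constructor
  · intro j hj
    exact Finset.mem_range.mpr ((mem_Afun r).mp hj).1
  · intro i hi k hk hik
    rw [mem_Afun] at hi ⊢
    exact ⟨hk, htrans a i k hi.2 hik⟩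

/-- The "center" of the trace of index `a`. -/
def ctr (a : ℕ) : ℤ := (G r (a+1) (Afun r a (a+1))).1

lemma G_Afun_fst (hrefl : ∀ a, r a a) (a : ℕ) :
    ∀ t, a + 1 ≤ t → (G r t (Afun r a t)).1 = ctr r a := by
  intro t ht
  induction t, ht using Nat.le_induction with
  | base => rfl
  | succ t ht ih =>
    by_cases hr : r a t
    · have htm : t ∈ Afun r a (t+1) := (mem_Afun r).mpr ⟨Nat.lt_succ_self t, hr⟩
      have hex : ∃ j ∈ (Afun r a (t+1)).erase t, r j t := by
        refine ⟨a, ?_, hr⟩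
        rw [Afun_erase r hr, mem_Afun]
        exact ⟨by omega, hrefl a⟩
      rw [G_succ, if_pos htm, if_pos hex, Afun_erase r hr]
      exact ih
    · have htm : t ∉ Afun r a (t+1) := fun h => hr ((mem_Afun r).mp h).2
      rw [G_succ, if_neg htm, Afun_succ_of_not r hr]
      split_ifs
      · simpa [spl0] using ih
      · exact ih

lemma ctr_mem_C (hrefl : ∀ a, r a a) (htrans : ∀ a b c, r a b → r b c → r a c)
    (hanti : ∀ a b, r a b → r b a → a = b) (a : ℕ) : ctr r a ∈ C r a := by
  have hF : Fresh r a (Afun r a (a+1)) := by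
    refine ⟨(mem_Afun r).mpr ⟨Nat.lt_succ_self a, hrefl a⟩, upClosed_Afun r htrans a (a+1), ?_⟩
    intro j hj hr'
    rw [Finset.mem_erase, mem_Afun] at hj
    exact hj.1 (hanti j a hr' hj.2.2)
  exact ⟨a, le_rfl, Afun r a (a+1), hF, hrefl a, self_mem_cls _⟩

lemma ctr_not_mem_C (hrefl : ∀ a, r a a) (htrans : ∀ a b c, r a b → r b c → r a c)
    {a b : ℕ} (hab : ¬ r a b) : ctr r a ∉ C r b := by
  rintro ⟨s, hs, B, hF, hsb, hx⟩
  have hc : ctr r a ∈ cls (G r (s+1) (Afun r a (s+1))) := by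
    rcases le_or_gt (a+1) (s+1) with h | h
    · have h1 := self_mem_cls (G r (s+1) (Afun r a (s+1)))
      rwa [G_Afun_fst r hrefl a (s+1) h] at h1
    · have h1 : ctr r a ∈ cls (G r (a+1) (Afun r a (a+1))) := self_mem_cls _
      have h2 := cls_G_filter_subset r (Afun r a (a+1)) (show s + 1 ≤ a + 1 by omega)
      rw [Afun_filter r (le_refl (a+1)), Afun_filter r (show s + 1 ≤ a + 1 by omega)] at h2
      exact h2 h1
  by_cases hBe : B = Afun r a (s+1)
  · have hsB : s ∈ B := hF.1
    rw [hBe, mem_Afun] at hsB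
    exact hab (htrans a s b hsB.2 hsb)
  · exact G_disjoint r (s+1) B (Afun r a (s+1)) hF.2.1
      (upClosed_Afun r htrans a (s+1)) hBe _ hx hc

lemma C_periodic (m : ℕ) : ∀ x : ℤ, x ∈ C r m ↔ x + 2 ^ (m+1) ∈ C r m := by
  have key : ∀ (s : ℕ) (B : Finset ℕ) (x : ℤ), s ≤ m →
      (x ∈ cls (G r (s+1) B) ↔ x + 2 ^ (m+1) ∈ cls (G r (s+1) B)) := by
    intro s B x hsm
    have hk : (G r (s+1) B).2 ≤ m + 1 := le_trans (G_snd_le r (s+1) B) (by omega)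
    have hdvd : (2:ℤ) ^ (G r (s+1) B).2 ∣ 2 ^ (m+1) := pow_dvd_pow 2 hk
    constructor
    · intro h
      have : x + 2 ^ (m+1) - (G r (s+1) B).1 = (x - (G r (s+1) B).1) + 2 ^ (m+1) := by
        ring
      show (2:ℤ) ^ (G r (s+1) B).2 ∣ x + 2 ^ (m+1) - (G r (s+1) B).1
      rw [this]
      exact dvd_add h hdvd
    · intro h
      have : x - (G r (s+1) B).1 = (x + 2 ^ (m+1) - (G r (s+1) B).1) - 2 ^ (m+1) := by
        ring
      show (2:ℤ) ^ (G r (s+1) B).2 ∣ x - (G r (s+1) B).1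
      rw [this]
      exact dvd_sub h hdvd
  intro x
  constructor
  · rintro ⟨s, hs, B, hF, hsm, hx⟩
    exact ⟨s, hs, B, hF, hsm, (key s B x hs).mp hx⟩
  · rintro ⟨s, hs, B, hF, hsm, hx⟩
    exact ⟨s, hs, B, hF, hsm, (key s B x hs).mpr hx⟩

end

end PeriodicUniversal

/-- The class of `2^n`-periodic subsets of `ℤ` ordered by inclusion is
universal: every countable partial order embeds into it. -/
theorem periodic_sets_universal (P : Type) [PartialOrder P] [Countable P] :
    ∃ φ : P → Set ℤ,
      (∀ x, IsPow2Periodic (φ x)) ∧ Function.Injective φ ∧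
      (∀ x y, x ≤ y ↔ φ x ⊆ φ y) := by
  classical
  obtain ⟨f, hf⟩ : ∃ f : P → ℕ, Function.Injective f := by
    exact Countable.exists_injective_nat P
  set r : ℕ → ℕ → Prop :=
    fun m n => m = n ∨ ∃ p q : P, f p = m ∧ f q = n ∧ p ≤ q with hr
  have hrefl : ∀ a, r a a := fun a => Or.inl rfl
  have htrans : ∀ a b c, r a b → r b c → r a c := by
    rintro a b c (rfl | ⟨p, q, rfl, rfl, hpq⟩) hbc
    · exact hbc
    · rcases hbc with rfl | ⟨p', q', hp', rfl, h'⟩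
      · exact Or.inr ⟨p, q, rfl, rfl, hpq⟩
      · have hpq' : p' = q := hf hp'
        subst hpq'
        exact Or.inr ⟨p, q', rfl, rfl, le_trans hpq h'⟩
  have hanti : ∀ a b, r a b → r b a → a = b := by
    rintro a b (rfl | ⟨p, q, rfl, rfl, hpq⟩) hba
    · rfl
    · rcases hba with h | ⟨p', q', hp', hq', h'⟩
      · exact h.symm
      · have h1 : p' = q := hf hp'
        have h2 : q' = p := hf hq'
        have h3 : q ≤ p := by rw [← h1, ← h2]; exact h'
        have : p = q := le_antisymm hpq h3
        rw [this]
  have hle : ∀ p q : P, p ≤ q ↔ r (f p) (f q) := by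
    intro p q
    constructor
    · intro h; exact Or.inr ⟨p, q, rfl, rfl, h⟩
    · rintro (h | ⟨p', q', hp', hq', h'⟩)
      · have : p = q := hf h
        rw [this]
      · have h1 : p' = p := hf hp'
        have h2 : q' = q := hf hq'
        subst h1; subst h2
        exact h'
  have hiff : ∀ x y : P, x ≤ y ↔ PeriodicUniversal.C r (f x) ⊆ PeriodicUniversal.C r (f y) := by
    intro x y
    constructor
    · intro h
      exact PeriodicUniversal.C_mono r hrefl htrans ((hle x y).mp h)
    · intro h
      by_contra hxy
      have hnr : ¬ r (f x) (f y) := fun hr' => hxy ((hle x y).mpr hr')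
      exact PeriodicUniversal.ctr_not_mem_C r hrefl htrans hnr
        (h (PeriodicUniversal.ctr_mem_C r hrefl htrans hanti (f x)))
  refine ⟨fun p => PeriodicUniversal.C r (f p), ?_, ?_, hiff⟩
  · intro p
    exact ⟨f p + 1, PeriodicUniversal.C_periodic r (f p)⟩
  · intro x y hxy
    have h1 : x ≤ y := (hiff x y).mpr (le_of_eq hxy)
    have h2 : y ≤ x := (hiff y x).mpr (le_of_eq hxy.symm)
    exact le_antisymm h1 h2
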